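/- Let X ∼ F_W(·; α) with F_W(x; α) = 1 − exp(−c0·x^α). Then the psi-function ψ̃ᵥᵤ(y; α) = [h̃(y^α)]ᵥᵘ − μ̃(α), with μ̃(α) = v + ∫ᵥᵘ exp(−c0·(h̃^←(z) − 1)) dz, has zero mean under the truncated Weibull distribution: ∫₁^∞ ψ̃ᵥᵤ(y; α) dF̃_W(y; α) = 0 for all α > 0. -/

import Mathlib

open Real Set MeasureTheory
open Filter Topology

/-- `h t = (c0 t - 1) log t - 1`. -/
noncomputable def h (c0 t : ℝ) : ℝ := (c0 * t - 1) * Real.log t - 1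

/-- Generalized inverse `h̃^←(y) = inf {t ≥ 1 : h t ≥ y}`. -/
noncomputable def hinv (c0 y : ℝ) : ℝ := sInf {t : ℝ | 1 ≤ t ∧ y ≤ h c0 t}

/-- Truncation `[z]ᵥᵘ = min (max z v) u`. -/
noncomputable def trunc (v u z : ℝ) : ℝ := min (max z v) u

/-- Density of the Weibull distribution truncated at 1. -/
noncomputable def truncDens (c0 α y : ℝ) : ℝ :=
  c0 * α * y ^ (α - 1) * Real.exp (-c0 * (y ^ α - 1))

namespace Stmt16Aux

variable {c0 : ℝ}

lemma h_one : h c0 1 = -1 := by simp [h]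

lemma h_meas : Measurable (h c0) :=
  (((measurable_const.mul measurable_id).sub measurable_const).mul
    Real.measurable_log).sub measurable_const

lemma h_contOn : ContinuousOn (h c0) (Ici 1) := by
  refine ContinuousOn.sub (ContinuousOn.mul ?_ ?_) continuousOn_const
  · exact (continuousOn_const.mul continuousOn_id).sub continuousOn_const
  · exact Real.continuousOn_log.mono fun x hx => by
      simp only [mem_compl_iff, mem_singleton_iff]
      intro hx0; rw [hx0] at hx; exact absurd hx.out (by norm_num)

lemma h_contAt {b : ℝ} (hb : b ≠ 0) : ContinuousAt (h c0) b :=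
  (((continuousAt_const.mul continuousAt_id).sub continuousAt_const).mul
    (Real.continuousAt_log hb)).sub continuousAt_const

lemma h_convexOn (hc0 : 0 < c0) : ConvexOn ℝ (Ici 1) (h c0) := by
  have hint : interior (Ici (1:ℝ)) = Ioi 1 := interior_Ici
  refine convexOn_of_hasDerivWithinAt2_nonneg (f' := fun t => c0 * Real.log t + c0 - t⁻¹)
    (f'' := fun t => c0 * t⁻¹ + (t ^ 2)⁻¹) (convex_Ici 1) h_contOn ?_ ?_ ?_
  · intro x hx
    rw [hint, mem_Ioi] at hx
    have hx0 : x ≠ 0 := by positivity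
    have h1 : HasDerivAt (fun t : ℝ => c0 * t - 1) c0 x := by
      simpa using ((hasDerivAt_id x).const_mul c0).sub_const 1
    have h2 := h1.mul (Real.hasDerivAt_log hx0)
    have h3 := h2.sub_const 1
    have : HasDerivAt (h c0) (c0 * Real.log x + (c0 * x - 1) * x⁻¹) x := h3
    have heq : c0 * Real.log x + (c0 * x - 1) * x⁻¹ = c0 * Real.log x + c0 - x⁻¹ := by
      field_simp; ring
    rw [heq] at this
    exact this.hasDerivWithinAt
  · intro x hx
    rw [hint, mem_Ioi] at hx
    have hx0 : x ≠ 0 := by positivity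
    have h1 : HasDerivAt (fun t : ℝ => c0 * Real.log t + c0) (c0 * x⁻¹) x := by
      simpa [mul_comm] using ((Real.hasDerivAt_log hx0).const_mul c0).add_const c0
    have h2 : HasDerivAt (fun t : ℝ => t⁻¹) (-(x ^ 2)⁻¹) x := hasDerivAt_inv hx0
    have := h1.sub h2
    have heq : c0 * x⁻¹ - -(x ^ 2)⁻¹ = c0 * x⁻¹ + (x ^ 2)⁻¹ := by ring
    rw [heq] at this
    exact this.hasDerivWithinAt
  · intro x hx
    rw [hint, mem_Ioi] at hx
    have : (0:ℝ) < x := by linarith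
    positivity

lemma hSet_nonempty (hc0 : 0 < c0) (z : ℝ) : ∃ t, 1 ≤ t ∧ z ≤ h c0 t := by
  refine ⟨max (Real.exp 1) ((|z| + 3) / c0), ?_, ?_⟩
  · have : (1:ℝ) ≤ Real.exp 1 := by
      have := Real.add_one_le_exp (1:ℝ); linarith
    exact this.trans (le_max_left _ _)
  · set t := max (Real.exp 1) ((|z| + 3) / c0) with ht
    have hexp : Real.exp 1 ≤ t := le_max_left _ _
    have ht0 : 0 < t := lt_of_lt_of_le (Real.exp_pos 1) hexp
    have hlog : 1 ≤ Real.log t := by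
      rw [Real.le_log_iff_exp_le ht0]; exact hexp
    have hct : |z| + 3 ≤ c0 * t := by
      have h1 : (|z| + 3) / c0 ≤ t := le_max_right _ _
      calc |z| + 3 = c0 * ((|z| + 3) / c0) := by field_simp
        _ ≤ c0 * t := by exact mul_le_mul_of_nonneg_left h1 hc0.le
    have habs : z ≤ |z| := le_abs_self z
    have h2 : |z| + 2 ≤ c0 * t - 1 := by linarith
    have h3 : (0:ℝ) ≤ |z| + 2 := by positivity
    unfold h
    nlinarith [abs_nonneg z]

lemma hinv_mem (hc0 : 0 < c0) (z : ℝ) :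
    1 ≤ hinv c0 z ∧ z ≤ h c0 (hinv c0 z) := by
  have hclosed : IsClosed {t : ℝ | 1 ≤ t ∧ z ≤ h c0 t} := by
    have : {t : ℝ | 1 ≤ t ∧ z ≤ h c0 t} = Ici 1 ∩ h c0 ⁻¹' (Ici z) := by
      ext t; simp [mem_Ici, and_comm]
    rw [this]
    exact h_contOn.preimage_isClosed_of_isClosed isClosed_Ici isClosed_Ici
  have hne : {t : ℝ | 1 ≤ t ∧ z ≤ h c0 t}.Nonempty := hSet_nonempty hc0 z
  have hbdd : BddBelow {t : ℝ | 1 ≤ t ∧ z ≤ h c0 t} := ⟨1, fun t ht => ht.1⟩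
  exact hclosed.csInf_mem hne hbdd

lemma hinv_gt_one (hc0 : 0 < c0) {z : ℝ} (hz : -1 < z) : 1 < hinv c0 z := by
  rcases (hinv_mem hc0 z).1.lt_or_eq with hlt | heq
  · exact hlt
  · exfalso
    have := (hinv_mem hc0 z).2
    rw [← heq, h_one] at this
    linarith

lemma h_hinv (hc0 : 0 < c0) {z : ℝ} (hz : -1 < z) : h c0 (hinv c0 z) = z := by
  set b := hinv c0 z with hbdef
  have hb := hinv_mem hc0 z
  rcases hb.2.lt_or_eq with hlt | heq
  · exfalso
    have hb1 : 1 < b := hinv_gt_one hc0 hz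
    have hb0 : b ≠ 0 := by positivity
    have hev1 : ∀ᶠ t in 𝓝 b, z < h c0 t := (h_contAt hb0).eventually_mem (Ioi_mem_nhds hlt)
    have hev2 : ∀ᶠ t in 𝓝 b, 1 < t := eventually_gt_nhds hb1
    obtain ⟨ε, hε, hball⟩ := Metric.eventually_nhds_iff.1 (hev1.and hev2)
    have hdist : dist (b - ε / 2) b < ε := by
      rw [Real.dist_eq, show b - ε / 2 - b = -(ε / 2) by ring, abs_neg,
        abs_of_pos (by linarith)]
      linarith
    obtain ⟨hz', h1'⟩ := hball hdist
    have hmem : b - ε / 2 ∈ {t : ℝ | 1 ≤ t ∧ z ≤ h c0 t} := ⟨h1'.le, hz'.le⟩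
    have hle : hinv c0 z ≤ b - ε / 2 := csInf_le ⟨1, fun t ht => ht.1⟩ hmem
    rw [← hbdef] at hle
    linarith
  · exact heq.symm

lemma superlevel (hc0 : 0 < c0) {z : ℝ} (hz : -1 < z) :
    {w : ℝ | z < h c0 w} ∩ Ioi 1 = Ioi (hinv c0 z) := by
  set b := hinv c0 z with hbdef
  have hb1 : 1 < b := hinv_gt_one hc0 hz
  have hbz : h c0 b = z := h_hinv hc0 hz
  ext w
  simp only [mem_inter_iff, mem_setOf_eq, mem_Ioi]
  constructor
  · rintro ⟨hzw, h1w⟩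
    have hle : b ≤ w := csInf_le ⟨1, fun t ht => ht.1⟩ ⟨h1w.le, hzw.le⟩
    rcases hle.lt_or_eq with hlt | heq
    · exact hlt
    · exfalso; rw [← heq, hbz] at hzw; exact lt_irrefl z hzw
  · intro hbw
    have h1w : 1 < w := hb1.trans hbw
    refine ⟨?_, h1w⟩
    have hseg : b ∈ openSegment ℝ (1:ℝ) w := by
      rw [openSegment_eq_Ioo h1w]; exact ⟨hb1, hbw⟩
    have := (h_convexOn hc0).lt_right_of_left_lt self_mem_Ici
      (mem_Ici.2 h1w.le) hseg (by rw [h_one, hbz]; exact hz)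
    rwa [hbz] at this

lemma neg_exp_hasDerivAt (c0 x : ℝ) :
    HasDerivAt (fun w => -Real.exp (-c0 * (w - 1))) (c0 * Real.exp (-c0 * (x - 1))) x := by
  have h1 : HasDerivAt (fun w : ℝ => -c0 * (w - 1)) (-c0) x := by
    simpa using ((hasDerivAt_id x).sub_const 1).const_mul (-c0)
  have := h1.exp.neg
  refine this.congr_deriv ?_
  ring

lemma neg_exp_tendsto (hc0 : 0 < c0) :
    Tendsto (fun w : ℝ => -Real.exp (-c0 * (w - 1))) atTop (𝓝 0) := by
  rw [show (0:ℝ) = -0 by ring]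
  apply Tendsto.neg
  apply Real.tendsto_exp_atBot.comp
  have h1 : Tendsto (fun w : ℝ => w - 1) atTop atTop :=
    tendsto_atTop_add_const_right _ (-1) tendsto_id
  have h2 : Tendsto (fun w : ℝ => c0 * (w - 1)) atTop atTop := h1.const_mul_atTop hc0
  have h3 := tendsto_neg_atTop_atBot.comp h2
  have heq : (fun w : ℝ => -c0 * (w - 1)) = (fun x : ℝ => -x) ∘ fun w => c0 * (w - 1) := by
    ext w; simp [neg_mul]
  rw [heq]
  exact h3

lemma integrableOn_dens0 (hc0 : 0 < c0) (b : ℝ) :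
    IntegrableOn (fun w => c0 * Real.exp (-c0 * (w - 1))) (Ioi b) := by
  refine integrableOn_Ioi_deriv_of_nonneg ?_ (fun x _ => neg_exp_hasDerivAt c0 x)
    (fun x _ => by positivity) (neg_exp_tendsto hc0)
  exact (((continuous_const.mul (continuous_id.sub continuous_const)).rexp).neg).continuousWithinAt

lemma integral_dens0 (hc0 : 0 < c0) (b : ℝ) :
    ∫ w in Ioi b, c0 * Real.exp (-c0 * (w - 1)) = Real.exp (-c0 * (b - 1)) := by
  rw [integral_Ioi_of_hasDerivAt_of_tendsto
    (((continuous_const.mul (continuous_id.sub continuous_const)).rexp).neg).continuousWithinAt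
    (fun x _ => neg_exp_hasDerivAt c0 x) (integrableOn_dens0 hc0 b) (neg_exp_tendsto hc0)]
  simp only [Pi.neg_apply, Pi.mul_apply, Pi.sub_apply, id_eq, neg_neg]
  ring

lemma integral_ite_lt {v u : ℝ} (hvu : v ≤ u) (x : ℝ) :
    ∫ z in v..u, (if z < x then (1:ℝ) else 0) = trunc v u x - v := by
  have hfun : (fun z => if z < x then (1:ℝ) else 0) = (Iio x).indicator (fun _ => (1:ℝ)) := by
    ext z; simp [Set.indicator_apply]
  rw [intervalIntegral.integral_of_le hvu, hfun, setIntegral_indicator measurableSet_Iio,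
    setIntegral_const]
  rcases le_or_gt x v with hxv | hvx
  · have he : Ioc v u ∩ Iio x = ∅ := by
      ext z; simp only [mem_inter_iff, mem_Iio, mem_Ioc, mem_empty_iff_false, iff_false]
      rintro ⟨⟨h1, h2⟩, h3⟩; linarith
    rw [he]
    simp [trunc, max_eq_right hxv, min_eq_left hvu]
  · rcases le_or_gt x u with hxu | hux
    · have he : Ioc v u ∩ Iio x = Ioo v x := by
        ext z; simp only [mem_inter_iff, mem_Iio, mem_Ioc, mem_Ioo]
        constructor
        · rintro ⟨⟨h1, h2⟩, h3⟩; exact ⟨h1, h3⟩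
        · rintro ⟨h1, h2⟩; exact ⟨⟨h1, by linarith⟩, h2⟩
      rw [he, Real.volume_real_Ioo_of_le hvx.le, trunc,
        max_eq_left hvx.le, min_eq_left hxu]
      simp
    · have he : Ioc v u ∩ Iio x = Ioc v u := by
        ext z; simp only [mem_inter_iff, mem_Iio, mem_Ioc, and_iff_left_iff_imp]
        rintro ⟨h1, h2⟩; linarith
      rw [he, Real.volume_real_Ioc_of_le hvu, trunc,
        max_eq_left (by linarith : v ≤ x), min_eq_right hux.le]
      simp

lemma trunc_bound {v u : ℝ} (hvu : v ≤ u) (x : ℝ) : |trunc v u x| ≤ max |v| |u| := by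
  have h1 : v ≤ trunc v u x := le_min (le_max_right x v) hvu
  have h2 : trunc v u x ≤ u := min_le_right _ _
  rw [abs_le]
  constructor
  · have h3 := neg_abs_le v; have h4 := le_max_left |v| |u|; linarith
  · have h3 := le_abs_self u; have h4 := le_max_right |v| |u|; linarith

lemma trunc_meas (v u : ℝ) : Measurable (fun w => trunc v u (h c0 w)) :=
  (h_meas.max measurable_const).min measurable_const

lemma key (hc0 : 0 < c0) {v u : ℝ} (hv : -1 ≤ v) (hvu : v < u) :
    ∫ w in Ioi (1:ℝ), trunc v u (h c0 w) * (c0 * Real.exp (-c0 * (w - 1)))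
      = v + ∫ z in v..u, Real.exp (-c0 * (hinv c0 z - 1)) := by
  set D : ℝ → ℝ := fun w => c0 * Real.exp (-c0 * (w - 1)) with hD
  have hDpos : ∀ w, 0 < D w := fun w => by positivity
  have hDint : IntegrableOn D (Ioi 1) := integrableOn_dens0 hc0 1
  have hDmeas : Measurable D :=
    measurable_const.mul ((measurable_const.mul (measurable_id.sub measurable_const)).exp)
  set M := max |v| |u| with hM
  have hmeas1 : Measurable (fun w => (trunc v u (h c0 w) - v) * D w) :=
    ((trunc_meas v u).sub measurable_const).mul hDmeas
  have hbnd : ∀ w, ‖(trunc v u (h c0 w) - v) * D w‖ ≤ (M + |v|) * D w := by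
    intro w
    rw [norm_mul, Real.norm_eq_abs, Real.norm_eq_abs, abs_of_pos (hDpos w)]
    apply mul_le_mul_of_nonneg_right _ (hDpos w).le
    calc |trunc v u (h c0 w) - v| ≤ |trunc v u (h c0 w)| + |v| := abs_sub _ _
      _ ≤ M + |v| := by have := trunc_bound hvu.le (h c0 w); linarith
  have hint1 : IntegrableOn (fun w => (trunc v u (h c0 w) - v) * D w) (Ioi 1) :=
    Integrable.mono' (hDint.const_mul (M + |v|)) hmeas1.aestronglyMeasurable (ae_of_all _ hbnd)
  have hDone : ∫ w in Ioi (1:ℝ), D w = 1 := by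
    rw [hD, integral_dens0 hc0 1]; norm_num
  have hsplit : ∫ w in Ioi (1:ℝ), trunc v u (h c0 w) * D w
      = (∫ w in Ioi (1:ℝ), (trunc v u (h c0 w) - v) * D w) + v := by
    have heq : ∀ w, trunc v u (h c0 w) * D w
        = (trunc v u (h c0 w) - v) * D w + v * D w := fun w => by ring
    simp_rw [heq]
    rw [integral_add hint1 (hDint.const_mul v), integral_const_mul, hDone, mul_one]
  have hpt : ∀ w, (trunc v u (h c0 w) - v) * D w
      = ∫ z in Ioc v u, (if z < h c0 w then D w else 0) := by
    intro w
    rw [← integral_ite_lt hvu.le (h c0 w), ← intervalIntegral.integral_mul_const,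
      intervalIntegral.integral_of_le hvu.le]
    apply setIntegral_congr_fun measurableSet_Ioc
    intro z _
    dsimp only
    split_ifs <;> simp
  have hFmeas : Measurable (fun p : ℝ × ℝ => if p.2 < h c0 p.1 then D p.1 else 0) := by
    refine Measurable.ite ?_ (hDmeas.comp measurable_fst) measurable_const
    exact measurableSet_lt measurable_snd (h_meas.comp measurable_fst)
  have hindint : ∀ w, Integrable (fun z => if z < h c0 w then D w else 0)
      (volume.restrict (Ioc v u)) := by
    intro w
    have heq : (fun z => if z < h c0 w then D w else 0)
        = (Iio (h c0 w)).indicator (fun _ => D w) := by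
      ext z; simp [Set.indicator_apply]
    rw [heq]
    exact (integrableOn_const measure_Ioc_lt_top.ne).indicator measurableSet_Iio
  have hFint : Integrable (Function.uncurry fun w z => if z < h c0 w then D w else 0)
      ((volume.restrict (Ioi (1:ℝ))).prod (volume.restrict (Ioc v u))) := by
    have huncurry : (Function.uncurry fun w z => if z < h c0 w then D w else 0)
        = fun p : ℝ × ℝ => if p.2 < h c0 p.1 then D p.1 else 0 := rfl
    rw [huncurry, integrable_prod_iff hFmeas.aestronglyMeasurable]
    refine ⟨ae_of_all _ fun w => hindint w, ?_⟩
    apply Integrable.mono' (g := fun w => (u - v) * D w) (hDint.const_mul (u - v))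
    · exact hFmeas.norm.aestronglyMeasurable.integral_prod_right'
    · apply ae_of_all
      intro w
      have h1 : ∀ z, ‖if z < h c0 w then D w else 0‖ ≤ D w := by
        intro z
        split_ifs
        · rw [Real.norm_eq_abs, abs_of_pos (hDpos w)]
        · simpa using (hDpos w).le
      have hmono : (∫ z, ‖if z < h c0 w then D w else 0‖ ∂(volume.restrict (Ioc v u)))
          ≤ ∫ _z, D w ∂(volume.restrict (Ioc v u)) :=
        integral_mono (hindint w).norm (integrableOn_const measure_Ioc_lt_top.ne) h1
      have hconst : (∫ _z, D w ∂(volume.restrict (Ioc v u))) = (u - v) * D w := by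
        rw [integral_const]
        rw [measureReal_restrict_apply_univ, Real.volume_real_Ioc_of_le hvu.le]
        simp [mul_comm]
      rw [Real.norm_eq_abs, abs_of_nonneg (integral_nonneg fun z => norm_nonneg _)]
      calc (∫ z, ‖if z < h c0 w then D w else 0‖ ∂(volume.restrict (Ioc v u)))
          ≤ ∫ _z, D w ∂(volume.restrict (Ioc v u)) := hmono
        _ = (u - v) * D w := hconst
  have hswap := integral_integral_swap hFint
  have hinner : ∀ z ∈ Ioc v u,
      (∫ w in Ioi (1:ℝ), if z < h c0 w then D w else 0)
        = Real.exp (-c0 * (hinv c0 z - 1)) := by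
    intro z hz
    have hz1 : -1 < z := lt_of_le_of_lt hv hz.1
    have hset : MeasurableSet {w : ℝ | z < h c0 w} := measurableSet_lt measurable_const h_meas
    have heq : (fun w => if z < h c0 w then D w else 0)
        = {w : ℝ | z < h c0 w}.indicator D := by
      ext w; simp [Set.indicator_apply, mem_setOf_eq]
    rw [heq, setIntegral_indicator hset, inter_comm, superlevel hc0 hz1]
    simp only [hD]
    exact integral_dens0 hc0 _
  calc ∫ w in Ioi (1:ℝ), trunc v u (h c0 w) * D w
      = (∫ w in Ioi (1:ℝ), (trunc v u (h c0 w) - v) * D w) + v := hsplit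
    _ = (∫ w in Ioi (1:ℝ), ∫ z in Ioc v u, if z < h c0 w then D w else 0) + v := by
        congr 1; exact integral_congr_ae (ae_of_all _ fun w => hpt w)
    _ = (∫ z in Ioc v u, ∫ w in Ioi (1:ℝ), if z < h c0 w then D w else 0) + v := by
        rw [hswap]
    _ = (∫ z in Ioc v u, Real.exp (-c0 * (hinv c0 z - 1))) + v := by
        congr 1; exact setIntegral_congr_fun measurableSet_Ioc hinner
    _ = v + ∫ z in v..u, Real.exp (-c0 * (hinv c0 z - 1)) := by
        rw [intervalIntegral.integral_of_le hvu.le]; ring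

end Stmt16Aux

/-- The psi-function `ψ̃ᵥᵤ(y; α) = [h̃(y^α)]ᵥᵘ - μ̃(α)`, with
`μ̃(α) = v + ∫ᵥᵘ exp(-c0 (h̃^←(z) - 1)) dz`, has zero mean under the truncated
Weibull distribution `F̃_W(·; α)` for every `α > 0`. -/
theorem stmt16 (c0 v u : ℝ) (hc0 : 0 < c0) (hv : -1 ≤ v) (hvu : v < u) :
    ∀ α > (0:ℝ),
      ∫ y in Ioi (1:ℝ),
        (trunc v u (h c0 (y ^ α))
          - (v + ∫ z in v..u, Real.exp (-c0 * (hinv c0 z - 1)))) * truncDens c0 α y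
        = 0 := by
  intro α hα
  set μv := v + ∫ z in v..u, Real.exp (-c0 * (hinv c0 z - 1)) with hμv
  set M := max |v| |u| with hM
  -- FTC for truncDens
  have hGd : ∀ x ∈ Ioi (1:ℝ), HasDerivAt (fun y : ℝ => -Real.exp (-c0 * (y ^ α - 1)))
      (truncDens c0 α x) x := by
    intro x hx
    have hx0 : x ≠ 0 := by have : (1:ℝ) < x := hx; positivity
    have hrp : HasDerivAt (fun y : ℝ => y ^ α) (α * x ^ (α - 1)) x :=
      Real.hasDerivAt_rpow_const (Or.inl hx0)
    have := (Stmt16Aux.neg_exp_hasDerivAt c0 (x ^ α)).comp x hrp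
    refine this.congr_deriv ?_
    unfold truncDens
    ring
  have hGcont : ContinuousWithinAt (fun y : ℝ => -Real.exp (-c0 * (y ^ α - 1))) (Ici 1) 1 := by
    have h1 : ContinuousAt (fun y : ℝ => y ^ α) 1 :=
      Real.continuousAt_rpow_const 1 α (Or.inl one_ne_zero)
    have h2 : Continuous (fun t : ℝ => -Real.exp (-c0 * (t - 1))) :=
      ((continuous_const.mul (continuous_id.sub continuous_const)).rexp).neg
    exact (h2.continuousAt.comp h1).continuousWithinAt
  have hGtend : Tendsto (fun y : ℝ => -Real.exp (-c0 * (y ^ α - 1))) atTop (𝓝 0) :=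
    (Stmt16Aux.neg_exp_tendsto hc0).comp (tendsto_rpow_atTop hα)
  have hTDnonneg : ∀ x ∈ Ioi (1:ℝ), 0 ≤ truncDens c0 α x := by
    intro x hx
    have hx0 : (0:ℝ) < x := lt_trans one_pos hx
    unfold truncDens
    positivity
  have hTD_int : IntegrableOn (truncDens c0 α) (Ioi 1) :=
    integrableOn_Ioi_deriv_of_nonneg hGcont hGd hTDnonneg hGtend
  have hmass : ∫ y in Ioi (1:ℝ), truncDens c0 α y = 1 := by
    rw [integral_Ioi_of_hasDerivAt_of_tendsto hGcont hGd hTD_int hGtend]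
    simp [Real.one_rpow]
  -- measurability
  have hrpmeas : Measurable (fun y : ℝ => y ^ α) := measurable_id.pow_const α
  have hTDmeas : Measurable (truncDens c0 α) := by
    unfold truncDens
    exact ((measurable_const.mul (measurable_id.pow_const (α - 1))).mul
      ((measurable_const.mul ((measurable_id.pow_const α).sub measurable_const)).exp))
  have hPTDmeas : Measurable (fun y => trunc v u (h c0 (y ^ α)) * truncDens c0 α y) :=
    ((Stmt16Aux.trunc_meas v u).comp hrpmeas).mul hTDmeas
  have hPTD_int : IntegrableOn (fun y => trunc v u (h c0 (y ^ α)) * truncDens c0 α y) (Ioi 1) := by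
    apply Integrable.mono' (hTD_int.const_mul M) hPTDmeas.aestronglyMeasurable
    rw [ae_restrict_iff' measurableSet_Ioi]
    apply ae_of_all
    intro y hy
    rw [norm_mul, Real.norm_eq_abs, Real.norm_eq_abs, abs_of_nonneg (hTDnonneg y hy)]
    exact mul_le_mul_of_nonneg_right (Stmt16Aux.trunc_bound hvu.le _) (hTDnonneg y hy)
  -- substitution
  have hgmeas : Measurable (fun w => trunc v u (h c0 w) * (c0 * Real.exp (-c0 * (w - 1)))) :=
    (Stmt16Aux.trunc_meas v u).mul
      (measurable_const.mul ((measurable_const.mul (measurable_id.sub measurable_const)).exp))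
  have hgbound : ∀ w, ‖trunc v u (h c0 w) * (c0 * Real.exp (-c0 * (w - 1)))‖
      ≤ M * (c0 * Real.exp (-c0 * (w - 1))) := by
    intro w
    have hD : (0:ℝ) < c0 * Real.exp (-c0 * (w - 1)) := by positivity
    rw [norm_mul, Real.norm_eq_abs, Real.norm_eq_abs, abs_of_pos hD]
    exact mul_le_mul_of_nonneg_right (Stmt16Aux.trunc_bound hvu.le _) hD.le
  have hg_int : IntegrableOn (fun w => trunc v u (h c0 w) * (c0 * Real.exp (-c0 * (w - 1))))
      (Ici 1) := by
    rw [integrableOn_Ici_iff_integrableOn_Ioi]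
    exact Integrable.mono' ((Stmt16Aux.integrableOn_dens0 hc0 1).const_mul M)
      hgmeas.aestronglyMeasurable (ae_of_all _ hgbound)
  have hsub : ∫ y in Ioi (1:ℝ), trunc v u (h c0 (y ^ α)) * truncDens c0 α y
      = ∫ w in Ioi (1:ℝ), trunc v u (h c0 w) * (c0 * Real.exp (-c0 * (w - 1))) := by
    have hcomp := integral_comp_mul_deriv_Ioi (f := fun y : ℝ => y ^ α)
      (f' := fun y : ℝ => α * y ^ (α - 1))
      (g := fun w => trunc v u (h c0 w) * (c0 * Real.exp (-c0 * (w - 1)))) (a := 1)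
      ?_ (tendsto_rpow_atTop hα) ?_ ?_ ?_ ?_
    · simp only [Function.comp_apply, Real.one_rpow] at hcomp
      rw [← hcomp]
      apply setIntegral_congr_fun measurableSet_Ioi
      intro y hy
      simp only [Function.comp_apply, truncDens]
      ring
    · intro y hy
      have hy0 : y ≠ 0 := by have : (1:ℝ) ≤ y := hy; positivity
      exact (Real.continuousAt_rpow_const y α (Or.inl hy0)).continuousWithinAt
    · intro x hx
      have hx0 : x ≠ 0 := by have : (1:ℝ) < x := hx; positivity
      exact (Real.hasDerivAt_rpow_const (Or.inl hx0)).hasDerivWithinAt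
    · -- continuity of g on image
      have himg : (fun y : ℝ => y ^ α) '' Ioi 1 ⊆ Ici 1 := by
        rintro _ ⟨y, hy, rfl⟩
        exact Real.one_le_rpow (le_of_lt hy) hα.le
      refine ContinuousOn.mono ?_ himg
      apply ContinuousOn.mul
      · exact (((continuous_id.max continuous_const).min continuous_const).comp_continuousOn
          Stmt16Aux.h_contOn)
      · exact (continuous_const.mul
          ((continuous_const.mul (continuous_id.sub continuous_const)).rexp)).continuousOn
    · -- integrability of g on image of Ici
      have himg : (fun y : ℝ => y ^ α) '' Ici 1 ⊆ Ici 1 := by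
        rintro _ ⟨y, hy, rfl⟩
        exact Real.one_le_rpow hy hα.le
      exact hg_int.mono_set himg
    · -- integrability of (g ∘ f) * f'
      have heq : (fun x => ((fun w => trunc v u (h c0 w) * (c0 * Real.exp (-c0 * (w - 1))))
            ∘ fun y : ℝ => y ^ α) x * (α * x ^ (α - 1)))
          = fun y => trunc v u (h c0 (y ^ α)) * truncDens c0 α y := by
        funext x
        simp only [Function.comp_apply, truncDens]
        ring
      rw [heq, integrableOn_Ici_iff_integrableOn_Ioi]
      exact hPTD_int
  -- assembly
  have hkey := Stmt16Aux.key hc0 hv hvu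
  have hsplit : ∫ y in Ioi (1:ℝ), (trunc v u (h c0 (y ^ α)) - μv) * truncDens c0 α y
      = (∫ y in Ioi (1:ℝ), trunc v u (h c0 (y ^ α)) * truncDens c0 α y)
        - ∫ y in Ioi (1:ℝ), μv * truncDens c0 α y := by
    simp_rw [sub_mul]
    exact integral_sub hPTD_int (hTD_int.const_mul μv)
  rw [hsplit, integral_const_mul, hmass, mul_one, hsub, hkey, ← hμv, sub_self]
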